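/- Let (q_k) be a sequence of nonnegative real numbers and c > 0 a constant with 2c < 1 such that q_k ≤ c(q_{k-1} + q_{k+1}) for all k ≥ 1, and suppose q_k → 0 as k → ∞. Then there exist constants C > 0 and δ > 0 (depending only on c and q_0) such that q_k ≤ C·e^{-δ k} for all k ≥ 0. -/

import Mathlib

/-- Abstract exponential-decay lemma: a nonnegative sequence satisfying the
two-sided comparison `q k ≤ c (q (k-1) + q (k+1))` with `2c < 1` and tending
to zero decays exponentially. -/
theorem exp_decay_of_two_sided_estimate
    (q : ℕ → ℝ) (c : ℝ) (hq : ∀ k, 0 ≤ q k) (hc : 0 < c) (hc2 : 2 * c < 1)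
    (hrec : ∀ k : ℕ, 1 ≤ k → q k ≤ c * (q (k - 1) + q (k + 1)))
    (hlim : Filter.Tendsto q Filter.atTop (nhds 0)) :
    ∃ C > (0:ℝ), ∃ δ > (0:ℝ), ∀ k : ℕ, q k ≤ C * Real.exp (-δ * k) := by
  set r : ℝ := 2 * c with hrdef
  have hr0 : 0 < r := by positivity
  have hr1 : r < 1 := hc2
  set A : ℝ := q 0 + 1 with hAdef
  have hA0 : 0 < A := by have := hq 0; linarith
  have hkey : c * (1 + r ^ 2) ≤ r := by nlinarith
  -- main claim
  have key : ∀ k, q k ≤ A * r ^ k := by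
    by_contra h
    push_neg at h
    obtain ⟨k₀, hk₀⟩ := h
    set f : ℕ → ℝ := fun k => q k - A * r ^ k with hf
    have hf0 : 0 < f k₀ := by simp only [hf]; linarith
    have hpow : Filter.Tendsto (fun k : ℕ => A * r ^ k) Filter.atTop (nhds 0) := by
      have := tendsto_pow_atTop_nhds_zero_of_lt_one hr0.le hr1
      simpa using this.const_mul A
    have hfl : Filter.Tendsto f Filter.atTop (nhds 0) := by
      simpa using hlim.sub hpow
    have hev : ∀ᶠ k in Filter.atTop, f k < f k₀ := hfl.eventually (gt_mem_nhds hf0)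
    obtain ⟨N, hN⟩ := Filter.eventually_atTop.mp hev
    set N' : ℕ := max N k₀ with hN'
    have hne : (Finset.range (N' + 1)).Nonempty := ⟨0, by simp⟩
    obtain ⟨m, hmmem, hm⟩ := Finset.exists_max_image (Finset.range (N' + 1)) f hne
    have hk₀mem : k₀ ∈ Finset.range (N' + 1) := by
      simp [hN']
    have hfm0 : 0 < f m := lt_of_lt_of_le hf0 (hm k₀ hk₀mem)
    -- global max
    have hglob : ∀ k, f k ≤ f m := by
      intro k
      by_cases hk : k ≤ N'
      · exact hm k (by simp; omega)
      · have : f k < f k₀ := hN k (by omega)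
        exact this.le.trans (hm k₀ hk₀mem)
    -- m ≥ 1
    have hm1 : 1 ≤ m := by
      rcases Nat.eq_zero_or_pos m with h0 | h1
      · exfalso
        have : f 0 = q 0 - A := by simp [hf, hAdef]
        rw [h0] at hfm0
        have hq0 := hq 0
        simp [hf, hAdef] at hfm0
        linarith
      · exact h1
    obtain ⟨n, rfl⟩ : ∃ n, m = n + 1 := ⟨m - 1, by omega⟩
    have hrec' := hrec (n + 1) (by omega)
    simp only [Nat.add_sub_cancel] at hrec'
    have hpowkey : c * (r ^ n + r ^ (n + 2)) ≤ r ^ (n + 1) := by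
      have h1 := mul_le_mul_of_nonneg_left hkey (pow_nonneg hr0.le n)
      have e1 : r ^ (n + 2) = r ^ n * r ^ 2 := by ring
      have e2 : r ^ (n + 1) = r ^ n * r := by ring
      nlinarith
    have h1 : f (n + 1) ≤ c * (f n + f (n + 2)) + (c * (r ^ n + r ^ (n + 2)) - r ^ (n + 1)) * A := by
      simp only [hf]
      have : n + 1 + 1 = n + 2 := rfl
      rw [this]
      nlinarith [hrec']
    have h2 : f n ≤ f (n + 1) := hglob n
    have h3 : f (n + 2) ≤ f (n + 1) := hglob (n + 2)
    have h4 : (c * (r ^ n + r ^ (n + 2)) - r ^ (n + 1)) * A ≤ 0 := by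
      apply mul_nonpos_of_nonpos_of_nonneg _ hA0.le
      linarith
    have : f (n + 1) ≤ 2 * c * f (n + 1) := by nlinarith
    nlinarith
  -- conclude
  have hlog : Real.log r < 0 := Real.log_neg hr0 hr1
  refine ⟨A, hA0, -Real.log r, by linarith, ?_⟩
  intro k
  have : Real.exp (-(-Real.log r) * (k : ℝ)) = r ^ k := by
    rw [show -(-Real.log r) * (k:ℝ) = (k:ℝ) * Real.log r by ring,
      Real.exp_nat_mul, Real.exp_log hr0]
  rw [this]
  exact key k
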